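/- Let I be a square-free monomial ideal of R = k[x_1,...,x_d] with I^{(n)} = ⋂_j Q_j^n over its minimal primes, and suppose Φ_m((I^{nm+j})^{1/m}) = I^{(n+1)} for all n ≥ 0, 1 ≤ j ≤ m (as established for symbolic powers). Then the R-module map R/I^{(n+1)} → R^{1/m}/(I^{(nm+j)})^{1/m} induced by the inclusion R ⊆ R^{1/m} is a split injection of R-modules, with splitting induced by Φ_m. -/

import Mathlib

open MvPolynomial

/-- The inclusion `R ⊆ R^{1/m}` under the identification `R^{1/m} ≅ R`
(`x_i^{1/m} ↦ x_i`) becomes the `k`-algebra map `x_i ↦ x_i^m`. -/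
noncomputable def iota (k : Type*) [Field k] (d m : ℕ) :
    MvPolynomial (Fin d) k →+* MvPolynomial (Fin d) k :=
  (aeval (R := k) fun i : Fin d => X i ^ m).toRingHom

/-- The projection `Φ_m : R^{1/m} → R` under the same identification: the monomial
`x^a` goes to `x^{a/m}` if `m` divides every coordinate of `a`, and to `0` otherwise. -/
noncomputable def Phi (k : Type*) [Field k] (d m : ℕ) :
    MvPolynomial (Fin d) k → MvPolynomial (Fin d) k :=
  fun p => ∑ a ∈ p.support,
    if ∀ i, m ∣ a i then
      monomial (Finsupp.mapRange (· / m) (Nat.zero_div m) a) (coeff a p)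
    else 0

section Aux

variable {k : Type*} [Field k] {d m : ℕ}

lemma coeff_Phi (hm : 1 ≤ m) (p : MvPolynomial (Fin d) k) (b : Fin d →₀ ℕ) :
    coeff b (Phi k d m p) = coeff (m • b) p := by
  have h0 : m ≠ 0 := by omega
  unfold Phi
  rw [MvPolynomial.coeff_sum]
  rw [Finset.sum_eq_single (m • b)]
  · split_ifs with h
    · rw [coeff_monomial, if_pos]
      ext i
      simp [Finsupp.smul_apply, Nat.mul_div_cancel_left _ (Nat.pos_of_ne_zero h0)]
    · exact absurd (fun i => ⟨b i, by simp [Finsupp.smul_apply]⟩) h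
  · intro a ha hne
    split_ifs with h
    · rw [coeff_monomial, if_neg]
      intro he
      apply hne
      ext i
      have := DFunLike.congr_fun he i
      simp only [Finsupp.mapRange_apply] at this
      obtain ⟨c, hc⟩ := h i
      simp [Finsupp.smul_apply, ← this, hc, Nat.mul_div_cancel_left _ (Nat.pos_of_ne_zero h0)]
    · simp
  · intro h
    rw [MvPolynomial.notMem_support_iff] at h
    simp [h]

lemma iota_monomial (hm : 1 ≤ m) (a : Fin d →₀ ℕ) (c : k) :
    iota k d m (monomial a c) = monomial (m • a) c := by
  have h0 : m ≠ 0 := by omega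
  show aeval (fun i : Fin d => X i ^ m) (monomial a c) = _
  rw [aeval_monomial, monomial_eq]
  congr 1
  rw [Finsupp.prod, Finsupp.prod, Finsupp.support_smul_eq h0]
  apply Finset.prod_congr rfl
  intro i _
  rw [Finsupp.smul_apply, ← pow_mul, smul_eq_mul]

lemma coeff_iota (hm : 1 ≤ m) (p : MvPolynomial (Fin d) k) (b : Fin d →₀ ℕ) :
    coeff (m • b) (iota k d m p) = coeff b p := by
  have h0 : m ≠ 0 := by omega
  induction p using MvPolynomial.induction_on' with
  | monomial a c =>
    rw [iota_monomial hm, coeff_monomial, coeff_monomial]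
    congr 1
    simp only [eq_iff_iff]
    constructor
    · intro h; ext i
      have := DFunLike.congr_fun h i
      simp only [Finsupp.smul_apply, smul_eq_mul] at this
      exact Nat.eq_of_mul_eq_mul_left (Nat.pos_of_ne_zero h0) this
    · rintro rfl; rfl
  | add p q hp hq => rw [map_add, coeff_add, coeff_add, hp, hq]

lemma Phi_iota (hm : 1 ≤ m) (p : MvPolynomial (Fin d) k) :
    Phi k d m (iota k d m p) = p := by
  ext b
  rw [coeff_Phi hm, coeff_iota hm]

/-- `Phi` as a `k`-linear map (for `m ≥ 1`). -/
noncomputable def PhiLin (k : Type*) [Field k] (d m : ℕ) (hm : 1 ≤ m) :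
    MvPolynomial (Fin d) k →ₗ[k] MvPolynomial (Fin d) k where
  toFun := Phi k d m
  map_add' p q := by ext b; simp only [coeff_Phi hm, coeff_add]
  map_smul' c p := by
    ext b
    simp only [coeff_Phi hm, RingHom.id_apply, MvPolynomial.coeff_smul, smul_eq_mul]

end Aux

/-- let `I` be a square-free monomial ideal with minimal primes
`Q_1,…,Q_s` and symbolic powers `I^{(n)} = ⋂_l Q_l^n`, and assume
`Φ_m((I^{(nm+j)})^{1/m}) = I^{(n+1)}` for our `n ≥ 0`, `m ≥ 1`, `1 ≤ j ≤ m`. Then the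
natural map `R/I^{(n+1)} → R^{1/m}/(I^{(nm+j)})^{1/m}` induced by the inclusion
`R ⊆ R^{1/m}` (i.e. by `iota`) is a split injection, with splitting induced by `Φ_m`. -/
theorem quotient_split_injection (k : Type*) [Field k] (d s : ℕ)
    (F : Fin s → Finset (Fin d))
    (Q : Fin s → Ideal (MvPolynomial (Fin d) k))
    (hQ : ∀ l, Q l = Ideal.span (X '' (F l : Set (Fin d))))
    (I : Ideal (MvPolynomial (Fin d) k)) (hI : I = ⨅ l, Q l)
    (symb : ℕ → Ideal (MvPolynomial (Fin d) k))
    (hsymb : ∀ n : ℕ, symb n = ⨅ l, Q l ^ n)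
    (n m j : ℕ) (hm : 1 ≤ m) (hj1 : 1 ≤ j) (hjm : j ≤ m)
    (hPhi : Phi k d m '' ((symb (n * m + j) : Ideal (MvPolynomial (Fin d) k)) :
        Set (MvPolynomial (Fin d) k)) =
      ((symb (n + 1) : Ideal (MvPolynomial (Fin d) k)) : Set (MvPolynomial (Fin d) k))) :
    ∃ (f : (MvPolynomial (Fin d) k ⧸ symb (n + 1)) →ₗ[k]
          (MvPolynomial (Fin d) k ⧸ symb (n * m + j)))
      (g : (MvPolynomial (Fin d) k ⧸ symb (n * m + j)) →ₗ[k]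
          (MvPolynomial (Fin d) k ⧸ symb (n + 1))),
      (∀ r : MvPolynomial (Fin d) k,
        f (Ideal.Quotient.mk (symb (n + 1)) r) =
          Ideal.Quotient.mk (symb (n * m + j)) (iota k d m r)) ∧
      (∀ r : MvPolynomial (Fin d) k,
        g (Ideal.Quotient.mk (symb (n * m + j)) r) =
          Ideal.Quotient.mk (symb (n + 1)) (Phi k d m r)) ∧
      g.comp f = LinearMap.id ∧ Function.Injective f := by
  -- iota maps symb (n+1) into symb (n*m+j)
  have hmap : ∀ a ∈ symb (n + 1), iota k d m a ∈ symb (n * m + j) := by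
    intro a ha
    rw [hsymb] at ha ⊢
    rw [Ideal.mem_iInf] at ha ⊢
    intro l
    have h2 : Ideal.map (iota k d m) (Q l) ≤ Q l ^ m := by
      rw [hQ, Ideal.map_span, Ideal.span_le]
      rintro _ ⟨_, ⟨i, hi, rfl⟩, rfl⟩
      have hXi : iota k d m (X i) = X i ^ m := by simp [iota]
      rw [hXi]
      exact Ideal.pow_mem_pow (Ideal.subset_span (Set.mem_image_of_mem X hi)) m
    have h3 : iota k d m a ∈ (Q l ^ m) ^ (n + 1) := by
      have h4 := Ideal.mem_map_of_mem (iota k d m) (ha l)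
      rw [Ideal.map_pow] at h4
      exact Ideal.pow_right_mono h2 _ h4
    rw [← pow_mul] at h3
    exact Ideal.pow_le_pow_right (by nlinarith) h3
  -- Phi maps symb (n*m+j) into symb (n+1)
  have hmap' : ∀ a ∈ symb (n * m + j), Phi k d m a ∈ symb (n + 1) := by
    intro a ha
    have : Phi k d m a ∈ (symb (n + 1) : Set (MvPolynomial (Fin d) k)) := by
      rw [← hPhi]; exact Set.mem_image_of_mem _ ha
    exact this
  -- define f
  set f : (MvPolynomial (Fin d) k ⧸ symb (n + 1)) →ₗ[k]
      (MvPolynomial (Fin d) k ⧸ symb (n * m + j)) :=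
    (Ideal.Quotient.liftₐ (symb (n + 1))
      ((Ideal.Quotient.mkₐ k (symb (n * m + j))).comp
        (aeval (R := k) fun i : Fin d => X i ^ m))
      (fun a ha => by
        simp only [AlgHom.comp_apply, Ideal.Quotient.mkₐ_eq_mk,
          Ideal.Quotient.eq_zero_iff_mem]
        exact hmap a ha)).toLinearMap with hf
  have hfmk : ∀ r : MvPolynomial (Fin d) k,
      f (Ideal.Quotient.mk (symb (n + 1)) r) =
        Ideal.Quotient.mk (symb (n * m + j)) (iota k d m r) := by
    intro r
    simp only [hf, AlgHom.toLinearMap_apply, Ideal.Quotient.liftₐ_apply,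
      Ideal.Quotient.lift_mk, AlgHom.coe_comp, Function.comp_apply,
      Ideal.Quotient.mkₐ_eq_mk]
    rfl
  -- define g
  set G : MvPolynomial (Fin d) k →ₗ[k] (MvPolynomial (Fin d) k ⧸ symb (n + 1)) :=
    (Ideal.Quotient.mkₐ k (symb (n + 1))).toLinearMap.comp (PhiLin k d m hm) with hG
  have hGker : (symb (n * m + j)).restrictScalars k ≤ LinearMap.ker G := by
    intro a ha
    simp only [hG, LinearMap.mem_ker, LinearMap.comp_apply, AlgHom.toLinearMap_apply,
      Ideal.Quotient.mkₐ_eq_mk, Ideal.Quotient.eq_zero_iff_mem]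
    exact hmap' a ha
  set g : (MvPolynomial (Fin d) k ⧸ symb (n * m + j)) →ₗ[k]
      (MvPolynomial (Fin d) k ⧸ symb (n + 1)) :=
    (Submodule.liftQ ((symb (n * m + j)).restrictScalars k) G hGker).comp
      (Submodule.Quotient.restrictScalarsEquiv k (symb (n * m + j))).symm.toLinearMap
      with hg
  have hgmk : ∀ r : MvPolynomial (Fin d) k,
      g (Ideal.Quotient.mk (symb (n * m + j)) r) =
        Ideal.Quotient.mk (symb (n + 1)) (Phi k d m r) := by
    intro r
    have h1 : Ideal.Quotient.mk (symb (n * m + j)) r = Submodule.Quotient.mk r := rfl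
    simp only [hg, LinearMap.comp_apply, LinearEquiv.coe_coe, h1,
      Submodule.Quotient.restrictScalarsEquiv_symm_mk, Submodule.liftQ_apply, hG,
      LinearMap.comp_apply, AlgHom.toLinearMap_apply, Ideal.Quotient.mkₐ_eq_mk]
    rfl
  have hgf : ∀ x, g (f x) = x := by
    intro x
    obtain ⟨r, rfl⟩ := Ideal.Quotient.mk_surjective x
    rw [hfmk, hgmk, Phi_iota hm]
  refine ⟨f, g, hfmk, hgmk, ?_, ?_⟩
  · apply LinearMap.ext
    intro x
    simpa using hgf x
  · intro a b hab
    rw [← hgf a, ← hgf b, hab]
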